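/- Let A be the complex 4 × 2 matrix A = (1/(2·3^{1/4})) · [[√(√3+1), (1−i)/√(√3+1)], [√(√3+1), (−1+i)/√(√3+1)], [√(√3−1), (1+i)/√(√3−1)], [√(√3−1), (−1−i)/√(√3−1)]]. Then for every pair of distinct indices i ≠ j, the 2 × 2 submatrix of A formed by rows i and j has smallest singular value exactly ½·√(2 − 2/√3). -/

import Mathlib

open Matrix Complex

/-- The complex `4 × 2` matrix
`A = (1/(2·3^{1/4})) · [[√(√3+1), (1−i)/√(√3+1)], [√(√3+1), (−1+i)/√(√3+1)],
[√(√3−1), (1+i)/√(√3−1)], [√(√3−1), (−1−i)/√(√3−1)]]`. -/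
noncomputable def tetraMatrix : Matrix (Fin 4) (Fin 2) ℂ :=
  ((1 / (2 * Real.sqrt (Real.sqrt 3)) : ℝ) : ℂ) •
    !![(Real.sqrt (Real.sqrt 3 + 1) : ℂ),
         (1 - Complex.I) / (Real.sqrt (Real.sqrt 3 + 1) : ℂ);
       (Real.sqrt (Real.sqrt 3 + 1) : ℂ),
         (-1 + Complex.I) / (Real.sqrt (Real.sqrt 3 + 1) : ℂ);
       (Real.sqrt (Real.sqrt 3 - 1) : ℂ),
         (1 + Complex.I) / (Real.sqrt (Real.sqrt 3 - 1) : ℂ);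
       (Real.sqrt (Real.sqrt 3 - 1) : ℂ),
         (-1 - Complex.I) / (Real.sqrt (Real.sqrt 3 - 1) : ℂ)]

namespace TetraAux

noncomputable def lam : ℝ := 1/2 - 1/(2*Real.sqrt 3)
noncomputable def cc : ℝ := 1 / (2 * Real.sqrt (Real.sqrt 3))
noncomputable def aa : ℝ := Real.sqrt (Real.sqrt 3 + 1)
noncomputable def bb : ℝ := Real.sqrt (Real.sqrt 3 - 1)

lemma s_gt1 : (1:ℝ) < Real.sqrt 3 := by
  have h : (1:ℝ) = Real.sqrt 1 := (Real.sqrt_one).symm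
  rw [h]; exact Real.sqrt_lt_sqrt (by norm_num) (by norm_num)

lemma s_pos : (0:ℝ) < Real.sqrt 3 := by linarith [s_gt1]
lemma s_sq : Real.sqrt 3 * Real.sqrt 3 = 3 := Real.mul_self_sqrt (by norm_num)
lemma aa_sq : aa * aa = Real.sqrt 3 + 1 := Real.mul_self_sqrt (by linarith [s_pos])
lemma bb_sq : bb * bb = Real.sqrt 3 - 1 := Real.mul_self_sqrt (by linarith [s_gt1])
lemma aa_pos : 0 < aa := Real.sqrt_pos.mpr (by linarith [s_pos])
lemma bb_pos : 0 < bb := Real.sqrt_pos.mpr (by linarith [s_gt1])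
lemma cc_sq : cc * cc = 1 / (4 * Real.sqrt 3) := by
  have h : Real.sqrt (Real.sqrt 3) * Real.sqrt (Real.sqrt 3) = Real.sqrt 3 :=
    Real.mul_self_sqrt (le_of_lt s_pos)
  rw [cc]
  rw [div_mul_div_comm]
  rw [show (2 * Real.sqrt (Real.sqrt 3)) * (2 * Real.sqrt (Real.sqrt 3))
      = 4 * (Real.sqrt (Real.sqrt 3) * Real.sqrt (Real.sqrt 3)) by ring, h]
  norm_num
lemma cc_pos : 0 < cc := by
  rw [cc]; positivity
lemma aa_ne : (aa:ℂ) ≠ 0 := by exact_mod_cast ne_of_gt aa_pos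
lemma bb_ne : (bb:ℂ) ≠ 0 := by exact_mod_cast ne_of_gt bb_pos

-- entry lemmas
lemma t00 : tetraMatrix 0 0 = (cc:ℂ) * (aa:ℂ) := by
  simp [tetraMatrix, cc, aa, Matrix.smul_apply, smul_eq_mul, Matrix.vecHead, Matrix.vecTail]
lemma t01 : tetraMatrix 0 1 = (cc:ℂ) * ((1 - Complex.I) / (aa:ℂ)) := by
  simp [tetraMatrix, cc, aa, Matrix.smul_apply, smul_eq_mul, Matrix.vecHead, Matrix.vecTail]
lemma t10 : tetraMatrix 1 0 = (cc:ℂ) * (aa:ℂ) := by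
  simp [tetraMatrix, cc, aa, Matrix.smul_apply, smul_eq_mul, Matrix.vecHead, Matrix.vecTail]
lemma t11 : tetraMatrix 1 1 = (cc:ℂ) * ((-1 + Complex.I) / (aa:ℂ)) := by
  simp [tetraMatrix, cc, aa, Matrix.smul_apply, smul_eq_mul, Matrix.vecHead, Matrix.vecTail]
lemma t20 : tetraMatrix 2 0 = (cc:ℂ) * (bb:ℂ) := by
  simp [tetraMatrix, cc, bb, Matrix.smul_apply, smul_eq_mul, Matrix.vecHead, Matrix.vecTail]
lemma t21 : tetraMatrix 2 1 = (cc:ℂ) * ((1 + Complex.I) / (bb:ℂ)) := by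
  simp [tetraMatrix, cc, bb, Matrix.smul_apply, smul_eq_mul, Matrix.vecHead, Matrix.vecTail]
lemma t30 : tetraMatrix 3 0 = (cc:ℂ) * (bb:ℂ) := by
  simp [tetraMatrix, cc, bb, Matrix.smul_apply, smul_eq_mul, Matrix.vecHead, Matrix.vecTail]
lemma t31 : tetraMatrix 3 1 = (cc:ℂ) * ((-1 - Complex.I) / (bb:ℂ)) := by
  simp [tetraMatrix, cc, bb, Matrix.smul_apply, smul_eq_mul, Matrix.vecHead, Matrix.vecTail]

-- normSq of entries
lemma na : normSq ((cc:ℂ) * (aa:ℂ)) = (Real.sqrt 3 + 1) / (4 * Real.sqrt 3) := by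
  rw [normSq_mul, normSq_ofReal, normSq_ofReal, cc_sq, aa_sq]
  field_simp
lemma nb : normSq ((cc:ℂ) * (bb:ℂ)) = (Real.sqrt 3 - 1) / (4 * Real.sqrt 3) := by
  rw [normSq_mul, normSq_ofReal, normSq_ofReal, cc_sq, bb_sq]
  field_simp
lemma nea (z : ℂ) (hz : normSq z = 2) :
    normSq ((cc:ℂ) * (z / (aa:ℂ))) = (Real.sqrt 3 - 1) / (4 * Real.sqrt 3) := by
  rw [normSq_mul, normSq_div, normSq_ofReal, normSq_ofReal, cc_sq, aa_sq, hz]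
  have h1 : Real.sqrt 3 + 1 ≠ 0 := by positivity
  have h2 : Real.sqrt 3 ≠ 0 := ne_of_gt s_pos
  field_simp
  linear_combination (-1:ℝ) * s_sq
lemma neb (z : ℂ) (hz : normSq z = 2) :
    normSq ((cc:ℂ) * (z / (bb:ℂ))) = (Real.sqrt 3 + 1) / (4 * Real.sqrt 3) := by
  rw [normSq_mul, normSq_div, normSq_ofReal, normSq_ofReal, cc_sq, bb_sq, hz]
  have h1 : Real.sqrt 3 - 1 ≠ 0 := by have := s_gt1; intro h; linarith
  have h2 : Real.sqrt 3 ≠ 0 := ne_of_gt s_pos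
  field_simp
  linear_combination (-1:ℝ) * s_sq

-- arithmetic combination lemmas
lemma two_nb_eq_lam :
    (Real.sqrt 3 - 1) / (4 * Real.sqrt 3) + (Real.sqrt 3 - 1) / (4 * Real.sqrt 3) = lam := by
  rw [lam]; have := s_pos; field_simp; ring
lemma lam_le_two_na :
    lam ≤ (Real.sqrt 3 + 1) / (4 * Real.sqrt 3) + (Real.sqrt 3 + 1) / (4 * Real.sqrt 3) := by
  rw [← two_nb_eq_lam]
  have hs := s_pos
  gcongr <;> linarith
lemma na_nb_half :
    (Real.sqrt 3 + 1) / (4 * Real.sqrt 3) + (Real.sqrt 3 - 1) / (4 * Real.sqrt 3) = 1/2 := by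
  have := s_pos; field_simp; ring
lemma nb_na_half :
    (Real.sqrt 3 - 1) / (4 * Real.sqrt 3) + (Real.sqrt 3 + 1) / (4 * Real.sqrt 3) = 1/2 := by
  have := s_pos; field_simp; ring

-- sigma facts
lemma sigma_sq : ((1/2) * Real.sqrt (2 - 2/Real.sqrt 3))^2 = lam := by
  have h0 : (0:ℝ) ≤ 2 - 2 / Real.sqrt 3 := by
    have := s_gt1
    have h1 : 2 / Real.sqrt 3 < 2 := by
      rw [div_lt_iff₀ s_pos]; nlinarith
    linarith
  rw [mul_pow, Real.sq_sqrt h0, lam]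
  field_simp

lemma sigma_nonneg : 0 ≤ (1/2) * Real.sqrt (2 - 2/Real.sqrt 3) := by positivity

lemma expand (α β γ δ u v : ℂ) :
    normSq (α*u+β*v) + normSq (γ*u+δ*v)
      = (normSq α + normSq γ) * normSq u + (normSq β + normSq δ) * normSq v
        + 2 * ((α * (starRingEnd ℂ β) + γ * (starRingEnd ℂ δ)) * (u * (starRingEnd ℂ v))).re := by
  simp only [normSq_apply, add_re, add_im, mul_re, mul_im, conj_re, conj_im]
  ring

lemma key (α β γ δ : ℂ)
    (h2 : ∃ u v : ℂ, normSq u + normSq v = 1 ∧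
      normSq (α*u+β*v) + normSq (γ*u+δ*v) = lam)
    (h1 : ∀ u v : ℂ, normSq u + normSq v = 1 →
      lam ≤ normSq (α*u+β*v) + normSq (γ*u+δ*v)) :
    IsLeast {t : ℝ | ∃ u v : ℂ, ‖u‖ ^ 2 + ‖v‖ ^ 2 = 1 ∧
      t = Real.sqrt (‖α*u+β*v‖^2 + ‖γ*u+δ*v‖^2)}
      ((1/2) * Real.sqrt (2 - 2/Real.sqrt 3)) := by
  constructor
  · obtain ⟨u, v, huv, hval⟩ := h2
    refine ⟨u, v, by rw [Complex.sq_norm, Complex.sq_norm]; exact huv, ?_⟩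
    rw [Complex.sq_norm, Complex.sq_norm, hval, ← sigma_sq, Real.sqrt_sq sigma_nonneg]
  · rintro t ⟨u, v, huv, rfl⟩
    rw [Complex.sq_norm, Complex.sq_norm] at huv ⊢
    calc (1/2) * Real.sqrt (2 - 2/Real.sqrt 3)
        = Real.sqrt lam := by rw [← sigma_sq, Real.sqrt_sq sigma_nonneg]
      _ ≤ _ := Real.sqrt_le_sqrt (h1 u v huv)

-- conjugation helpers
lemma cancel (x w : ℂ) (hw : w ≠ 0) :
    (cc:ℂ) * w * ((cc:ℂ) * (x / w)) = (cc:ℂ) * (cc:ℂ) * x := by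
  field_simp

lemma hc : ((cc:ℂ) * (cc:ℂ)) * 2 = ((1 / (2 * Real.sqrt 3) : ℝ) : ℂ) := by
  have h2 : ((cc * cc : ℝ) : ℂ) = ((1 / (4 * Real.sqrt 3) : ℝ) : ℂ) := by
    exact_mod_cast congrArg Complex.ofReal cc_sq
  push_cast at h2 ⊢
  linear_combination 2 * h2

lemma g_mixed (e f ζ : ℂ) (hef : (starRingEnd ℂ) e + (starRingEnd ℂ) f = 2 * ζ) :
    (cc:ℂ) * (aa:ℂ) * (starRingEnd ℂ) ((cc:ℂ) * (e / (aa:ℂ)))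
      + (cc:ℂ) * (bb:ℂ) * (starRingEnd ℂ) ((cc:ℂ) * (f / (bb:ℂ)))
      = ((1 / (2 * Real.sqrt 3) : ℝ) : ℂ) * ζ := by
  simp only [_root_.map_mul, map_div₀, Complex.conj_ofReal]
  rw [cancel _ _ aa_ne, cancel _ _ bb_ne, ← mul_add, hef]
  linear_combination ζ * hc

lemma g_mixed' (e f ζ : ℂ) (hef : (starRingEnd ℂ) e + (starRingEnd ℂ) f = 2 * ζ) :
    (cc:ℂ) * (bb:ℂ) * (starRingEnd ℂ) ((cc:ℂ) * (e / (bb:ℂ)))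
      + (cc:ℂ) * (aa:ℂ) * (starRingEnd ℂ) ((cc:ℂ) * (f / (aa:ℂ)))
      = ((1 / (2 * Real.sqrt 3) : ℝ) : ℂ) * ζ := by
  simp only [_root_.map_mul, map_div₀, Complex.conj_ofReal]
  rw [cancel _ _ bb_ne, cancel _ _ aa_ne, ← mul_add, hef]
  linear_combination ζ * hc

lemma g_diag_a (e f : ℂ) (hef : (starRingEnd ℂ) e + (starRingEnd ℂ) f = 0) :
    (cc:ℂ) * (aa:ℂ) * (starRingEnd ℂ) ((cc:ℂ) * (e / (aa:ℂ)))
      + (cc:ℂ) * (aa:ℂ) * (starRingEnd ℂ) ((cc:ℂ) * (f / (aa:ℂ))) = 0 := by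
  simp only [_root_.map_mul, map_div₀, Complex.conj_ofReal]
  rw [cancel _ _ aa_ne, cancel _ _ aa_ne, ← mul_add, hef, mul_zero]

lemma g_diag_b (e f : ℂ) (hef : (starRingEnd ℂ) e + (starRingEnd ℂ) f = 0) :
    (cc:ℂ) * (bb:ℂ) * (starRingEnd ℂ) ((cc:ℂ) * (e / (bb:ℂ)))
      + (cc:ℂ) * (bb:ℂ) * (starRingEnd ℂ) ((cc:ℂ) * (f / (bb:ℂ))) = 0 := by
  simp only [_root_.map_mul, map_div₀, Complex.conj_ofReal]
  rw [cancel _ _ bb_ne, cancel _ _ bb_ne, ← mul_add, hef, mul_zero]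

-- case lemmas
lemma diag_h2h1 (α β γ δ : ℂ)
    (hA : lam ≤ normSq α + normSq γ) (hB : lam ≤ normSq β + normSq δ)
    (hg : α * (starRingEnd ℂ β) + γ * (starRingEnd ℂ δ) = 0)
    (hmem : normSq α + normSq γ = lam ∨ normSq β + normSq δ = lam) :
    (∃ u v : ℂ, normSq u + normSq v = 1 ∧
        normSq (α*u+β*v) + normSq (γ*u+δ*v) = lam) ∧
    (∀ u v : ℂ, normSq u + normSq v = 1 →
        lam ≤ normSq (α*u+β*v) + normSq (γ*u+δ*v)) := by
  constructor
  · rcases hmem with h | h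
    · exact ⟨1, 0, by simp, by rw [expand, hg]; simp [h]⟩
    · exact ⟨0, 1, by simp, by rw [expand, hg]; simp [h]⟩
  · intro u v huv
    rw [expand, hg]
    simp only [zero_mul, Complex.zero_re, mul_zero, add_zero]
    have hl : lam * normSq u + lam * normSq v = lam := by
      rw [← mul_add, huv, mul_one]
    linarith [mul_le_mul_of_nonneg_right hA (normSq_nonneg u),
      mul_le_mul_of_nonneg_right hB (normSq_nonneg v)]

lemma mixed_h2h1 (α β γ δ ζ : ℂ) (hζ : normSq ζ = 1)
    (hA : normSq α + normSq γ = 1/2) (hB : normSq β + normSq δ = 1/2)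
    (hg : α * (starRingEnd ℂ β) + γ * (starRingEnd ℂ δ)
        = ((1 / (2 * Real.sqrt 3) : ℝ) : ℂ) * ζ) :
    (∃ u v : ℂ, normSq u + normSq v = 1 ∧
        normSq (α*u+β*v) + normSq (γ*u+δ*v) = lam) ∧
    (∀ u v : ℂ, normSq u + normSq v = 1 →
        lam ≤ normSq (α*u+β*v) + normSq (γ*u+δ*v)) := by
  have hs := s_pos
  have hw : ((Real.sqrt 2)⁻¹ : ℝ) * ((Real.sqrt 2)⁻¹ : ℝ) = 1/2 := by
    rw [← mul_inv, Real.mul_self_sqrt (by norm_num)]; norm_num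
  constructor
  · refine ⟨(((Real.sqrt 2)⁻¹ : ℝ) : ℂ), -(ζ * (((Real.sqrt 2)⁻¹ : ℝ) : ℂ)), ?_, ?_⟩
    · rw [normSq_neg, normSq_mul, hζ, normSq_ofReal, hw]; norm_num
    · rw [expand, hA, hB, hg, normSq_neg, normSq_mul, hζ, normSq_ofReal, hw]
      have hz : ζ * (starRingEnd ℂ) ζ = 1 := by
        rw [Complex.mul_conj, hζ]; norm_num
      have hcross : ((1 / (2 * Real.sqrt 3) : ℝ) : ℂ) * ζ *
          ((((Real.sqrt 2)⁻¹ : ℝ) : ℂ) * (starRingEnd ℂ) (-(ζ * (((Real.sqrt 2)⁻¹ : ℝ) : ℂ))))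
          = ((-(1/(4*Real.sqrt 3)) : ℝ) : ℂ) := by
        simp only [map_neg, _root_.map_mul, Complex.conj_ofReal]
        have hw' : ((((Real.sqrt 2)⁻¹ : ℝ)) : ℂ) * ((((Real.sqrt 2)⁻¹ : ℝ)) : ℂ)
            = ((1/2 : ℝ) : ℂ) := by exact_mod_cast congrArg Complex.ofReal hw
        push_cast at hw' ⊢
        linear_combination (-(1/(2*((Real.sqrt 3):ℂ))) * (((Real.sqrt 2):ℂ))⁻¹ * (((Real.sqrt 2):ℂ))⁻¹) * hz
          + (-(1/(2*((Real.sqrt 3):ℂ)))) * hw'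
      rw [hcross, Complex.ofReal_re, lam]
      field_simp
      ring
  · intro u v huv
    rw [expand, hA, hB, hg]
    set w := u * (starRingEnd ℂ) v with hwdef
    have h1 : -(‖(((1 / (2 * Real.sqrt 3) : ℝ) : ℂ) * ζ * w)‖)
        ≤ ((((1 / (2 * Real.sqrt 3) : ℝ) : ℂ) * ζ * w)).re := by
      have h := Complex.abs_re_le_norm (((1 / (2 * Real.sqrt 3) : ℝ) : ℂ) * ζ * w)
      have := abs_le.mp h
      linarith [this.1]
    have habsζ : ‖ζ‖ = 1 := by
      have h := Complex.sq_norm ζ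
      rw [hζ] at h
      nlinarith [norm_nonneg ζ]
    have habs : ‖(((1 / (2 * Real.sqrt 3) : ℝ) : ℂ) * ζ * w)‖
        = (1 / (2 * Real.sqrt 3)) * (‖u‖ * ‖v‖) := by
      rw [norm_mul, norm_mul, habsζ, Complex.norm_real, Real.norm_eq_abs, hwdef, norm_mul, Complex.norm_conj]
      rw [abs_of_pos (by positivity)]
      ring
    have hu2 : normSq u = ‖u‖ ^ 2 := (Complex.sq_norm u).symm
    have hv2 : normSq v = ‖v‖ ^ 2 := (Complex.sq_norm v).symm
    rw [hu2, hv2] at huv ⊢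
    rw [lam]
    have hfin : 2 * ‖u‖ * ‖v‖ ≤ 1 := by
      nlinarith [sq_nonneg (‖u‖ - ‖v‖)]
    have h2s : 0 < 1 / (2 * Real.sqrt 3) := by positivity
    nlinarith [habs, h1, norm_nonneg u, norm_nonneg v,
      mul_le_of_le_one_right (le_of_lt h2s) hfin]

end TetraAux
/-- For every pair of distinct indices `i ≠ j`, the `2 × 2` submatrix of `tetraMatrix`
formed by rows `i` and `j` has smallest singular value — the minimum of `‖Mx‖` over
Hermitian-unit `x ∈ ℂ²` — exactly `½ √(2 − 2/√3)`. -/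
theorem tetraMatrix_submatrix_sigma_min (i j : Fin 4) (hij : i ≠ j) :
    IsLeast
      { t : ℝ | ∃ u v : ℂ, ‖u‖ ^ 2 + ‖v‖ ^ 2 = 1 ∧
          t = Real.sqrt (‖tetraMatrix i 0 * u + tetraMatrix i 1 * v‖ ^ 2
            + ‖tetraMatrix j 0 * u + tetraMatrix j 1 * v‖ ^ 2) }
      ((1 / 2) * Real.sqrt (2 - 2 / Real.sqrt 3)) := by
  fin_cases i <;> fin_cases j
  · exact absurd rfl hij
  · obtain ⟨h2, h1⟩ := TetraAux.diag_h2h1 (tetraMatrix 0 0) (tetraMatrix 0 1) (tetraMatrix 1 0) (tetraMatrix 1 1)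
      (by rw [TetraAux.t00, TetraAux.t10, TetraAux.na]; exact TetraAux.lam_le_two_na)
      (by rw [TetraAux.t01, TetraAux.t11, TetraAux.nea _ (by simp [Complex.normSq_apply]; norm_num : Complex.normSq (1 - Complex.I) = 2), TetraAux.nea _ (by simp [Complex.normSq_apply]; norm_num : Complex.normSq (-1 + Complex.I) = 2)]; exact le_of_eq TetraAux.two_nb_eq_lam.symm)
      (by rw [TetraAux.t00, TetraAux.t01, TetraAux.t10, TetraAux.t11]; exact TetraAux.g_diag_a _ _ (by simp [Complex.ext_iff]))
      (Or.inr (by rw [TetraAux.t01, TetraAux.t11, TetraAux.nea _ (by simp [Complex.normSq_apply]; norm_num : Complex.normSq (1 - Complex.I) = 2), TetraAux.nea _ (by simp [Complex.normSq_apply]; norm_num : Complex.normSq (-1 + Complex.I) = 2)]; exact TetraAux.two_nb_eq_lam))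
    exact TetraAux.key _ _ _ _ h2 h1
  · obtain ⟨h2, h1⟩ := TetraAux.mixed_h2h1 (tetraMatrix 0 0) (tetraMatrix 0 1) (tetraMatrix 2 0) (tetraMatrix 2 1) (1) (by simp)
      (by rw [TetraAux.t00, TetraAux.t20, TetraAux.na, TetraAux.nb]; exact TetraAux.na_nb_half)
      (by rw [TetraAux.t01, TetraAux.t21, TetraAux.nea _ (by simp [Complex.normSq_apply]; norm_num : Complex.normSq (1 - Complex.I) = 2), TetraAux.neb _ (by simp [Complex.normSq_apply]; norm_num : Complex.normSq (1 + Complex.I) = 2)]; exact TetraAux.nb_na_half)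
      (by rw [TetraAux.t00, TetraAux.t01, TetraAux.t20, TetraAux.t21]; exact TetraAux.g_mixed _ _ (1) (by simp [Complex.ext_iff]; norm_num))
    exact TetraAux.key _ _ _ _ h2 h1
  · obtain ⟨h2, h1⟩ := TetraAux.mixed_h2h1 (tetraMatrix 0 0) (tetraMatrix 0 1) (tetraMatrix 3 0) (tetraMatrix 3 1) (Complex.I) (by simp)
      (by rw [TetraAux.t00, TetraAux.t30, TetraAux.na, TetraAux.nb]; exact TetraAux.na_nb_half)
      (by rw [TetraAux.t01, TetraAux.t31, TetraAux.nea _ (by simp [Complex.normSq_apply]; norm_num : Complex.normSq (1 - Complex.I) = 2), TetraAux.neb _ (by simp [Complex.normSq_apply]; norm_num : Complex.normSq (-1 - Complex.I) = 2)]; exact TetraAux.nb_na_half)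
      (by rw [TetraAux.t00, TetraAux.t01, TetraAux.t30, TetraAux.t31]; exact TetraAux.g_mixed _ _ (Complex.I) (by simp [Complex.ext_iff]; norm_num))
    exact TetraAux.key _ _ _ _ h2 h1
  · obtain ⟨h2, h1⟩ := TetraAux.diag_h2h1 (tetraMatrix 1 0) (tetraMatrix 1 1) (tetraMatrix 0 0) (tetraMatrix 0 1)
      (by rw [TetraAux.t10, TetraAux.t00, TetraAux.na]; exact TetraAux.lam_le_two_na)
      (by rw [TetraAux.t11, TetraAux.t01, TetraAux.nea _ (by simp [Complex.normSq_apply]; norm_num : Complex.normSq (-1 + Complex.I) = 2), TetraAux.nea _ (by simp [Complex.normSq_apply]; norm_num : Complex.normSq (1 - Complex.I) = 2)]; exact le_of_eq TetraAux.two_nb_eq_lam.symm)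
      (by rw [TetraAux.t10, TetraAux.t11, TetraAux.t00, TetraAux.t01]; exact TetraAux.g_diag_a _ _ (by simp [Complex.ext_iff]))
      (Or.inr (by rw [TetraAux.t11, TetraAux.t01, TetraAux.nea _ (by simp [Complex.normSq_apply]; norm_num : Complex.normSq (-1 + Complex.I) = 2), TetraAux.nea _ (by simp [Complex.normSq_apply]; norm_num : Complex.normSq (1 - Complex.I) = 2)]; exact TetraAux.two_nb_eq_lam))
    exact TetraAux.key _ _ _ _ h2 h1
  · exact absurd rfl hij
  · obtain ⟨h2, h1⟩ := TetraAux.mixed_h2h1 (tetraMatrix 1 0) (tetraMatrix 1 1) (tetraMatrix 2 0) (tetraMatrix 2 1) (-Complex.I) (by simp)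
      (by rw [TetraAux.t10, TetraAux.t20, TetraAux.na, TetraAux.nb]; exact TetraAux.na_nb_half)
      (by rw [TetraAux.t11, TetraAux.t21, TetraAux.nea _ (by simp [Complex.normSq_apply]; norm_num : Complex.normSq (-1 + Complex.I) = 2), TetraAux.neb _ (by simp [Complex.normSq_apply]; norm_num : Complex.normSq (1 + Complex.I) = 2)]; exact TetraAux.nb_na_half)
      (by rw [TetraAux.t10, TetraAux.t11, TetraAux.t20, TetraAux.t21]; exact TetraAux.g_mixed _ _ (-Complex.I) (by simp [Complex.ext_iff]; norm_num))
    exact TetraAux.key _ _ _ _ h2 h1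
  · obtain ⟨h2, h1⟩ := TetraAux.mixed_h2h1 (tetraMatrix 1 0) (tetraMatrix 1 1) (tetraMatrix 3 0) (tetraMatrix 3 1) (-1) (by simp)
      (by rw [TetraAux.t10, TetraAux.t30, TetraAux.na, TetraAux.nb]; exact TetraAux.na_nb_half)
      (by rw [TetraAux.t11, TetraAux.t31, TetraAux.nea _ (by simp [Complex.normSq_apply]; norm_num : Complex.normSq (-1 + Complex.I) = 2), TetraAux.neb _ (by simp [Complex.normSq_apply]; norm_num : Complex.normSq (-1 - Complex.I) = 2)]; exact TetraAux.nb_na_half)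
      (by rw [TetraAux.t10, TetraAux.t11, TetraAux.t30, TetraAux.t31]; exact TetraAux.g_mixed _ _ (-1) (by simp [Complex.ext_iff]; norm_num))
    exact TetraAux.key _ _ _ _ h2 h1
  · obtain ⟨h2, h1⟩ := TetraAux.mixed_h2h1 (tetraMatrix 2 0) (tetraMatrix 2 1) (tetraMatrix 0 0) (tetraMatrix 0 1) (1) (by simp)
      (by rw [TetraAux.t20, TetraAux.t00, TetraAux.nb, TetraAux.na]; exact TetraAux.nb_na_half)
      (by rw [TetraAux.t21, TetraAux.t01, TetraAux.neb _ (by simp [Complex.normSq_apply]; norm_num : Complex.normSq (1 + Complex.I) = 2), TetraAux.nea _ (by simp [Complex.normSq_apply]; norm_num : Complex.normSq (1 - Complex.I) = 2)]; exact TetraAux.na_nb_half)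
      (by rw [TetraAux.t20, TetraAux.t21, TetraAux.t00, TetraAux.t01]; exact TetraAux.g_mixed' _ _ (1) (by simp [Complex.ext_iff]; norm_num))
    exact TetraAux.key _ _ _ _ h2 h1
  · obtain ⟨h2, h1⟩ := TetraAux.mixed_h2h1 (tetraMatrix 2 0) (tetraMatrix 2 1) (tetraMatrix 1 0) (tetraMatrix 1 1) (-Complex.I) (by simp)
      (by rw [TetraAux.t20, TetraAux.t10, TetraAux.nb, TetraAux.na]; exact TetraAux.nb_na_half)
      (by rw [TetraAux.t21, TetraAux.t11, TetraAux.neb _ (by simp [Complex.normSq_apply]; norm_num : Complex.normSq (1 + Complex.I) = 2), TetraAux.nea _ (by simp [Complex.normSq_apply]; norm_num : Complex.normSq (-1 + Complex.I) = 2)]; exact TetraAux.na_nb_half)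
      (by rw [TetraAux.t20, TetraAux.t21, TetraAux.t10, TetraAux.t11]; exact TetraAux.g_mixed' _ _ (-Complex.I) (by simp [Complex.ext_iff]; norm_num))
    exact TetraAux.key _ _ _ _ h2 h1
  · exact absurd rfl hij
  · obtain ⟨h2, h1⟩ := TetraAux.diag_h2h1 (tetraMatrix 2 0) (tetraMatrix 2 1) (tetraMatrix 3 0) (tetraMatrix 3 1)
      (by rw [TetraAux.t20, TetraAux.t30, TetraAux.nb]; exact le_of_eq TetraAux.two_nb_eq_lam.symm)
      (by rw [TetraAux.t21, TetraAux.t31, TetraAux.neb _ (by simp [Complex.normSq_apply]; norm_num : Complex.normSq (1 + Complex.I) = 2), TetraAux.neb _ (by simp [Complex.normSq_apply]; norm_num : Complex.normSq (-1 - Complex.I) = 2)]; exact TetraAux.lam_le_two_na)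
      (by rw [TetraAux.t20, TetraAux.t21, TetraAux.t30, TetraAux.t31]; exact TetraAux.g_diag_b _ _ (by simp [Complex.ext_iff]))
      (Or.inl (by rw [TetraAux.t20, TetraAux.t30, TetraAux.nb]; exact TetraAux.two_nb_eq_lam))
    exact TetraAux.key _ _ _ _ h2 h1
  · obtain ⟨h2, h1⟩ := TetraAux.mixed_h2h1 (tetraMatrix 3 0) (tetraMatrix 3 1) (tetraMatrix 0 0) (tetraMatrix 0 1) (Complex.I) (by simp)
      (by rw [TetraAux.t30, TetraAux.t00, TetraAux.nb, TetraAux.na]; exact TetraAux.nb_na_half)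
      (by rw [TetraAux.t31, TetraAux.t01, TetraAux.neb _ (by simp [Complex.normSq_apply]; norm_num : Complex.normSq (-1 - Complex.I) = 2), TetraAux.nea _ (by simp [Complex.normSq_apply]; norm_num : Complex.normSq (1 - Complex.I) = 2)]; exact TetraAux.na_nb_half)
      (by rw [TetraAux.t30, TetraAux.t31, TetraAux.t00, TetraAux.t01]; exact TetraAux.g_mixed' _ _ (Complex.I) (by simp [Complex.ext_iff]; norm_num))
    exact TetraAux.key _ _ _ _ h2 h1
  · obtain ⟨h2, h1⟩ := TetraAux.mixed_h2h1 (tetraMatrix 3 0) (tetraMatrix 3 1) (tetraMatrix 1 0) (tetraMatrix 1 1) (-1) (by simp)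
      (by rw [TetraAux.t30, TetraAux.t10, TetraAux.nb, TetraAux.na]; exact TetraAux.nb_na_half)
      (by rw [TetraAux.t31, TetraAux.t11, TetraAux.neb _ (by simp [Complex.normSq_apply]; norm_num : Complex.normSq (-1 - Complex.I) = 2), TetraAux.nea _ (by simp [Complex.normSq_apply]; norm_num : Complex.normSq (-1 + Complex.I) = 2)]; exact TetraAux.na_nb_half)
      (by rw [TetraAux.t30, TetraAux.t31, TetraAux.t10, TetraAux.t11]; exact TetraAux.g_mixed' _ _ (-1) (by simp [Complex.ext_iff]; norm_num))
    exact TetraAux.key _ _ _ _ h2 h1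
  · obtain ⟨h2, h1⟩ := TetraAux.diag_h2h1 (tetraMatrix 3 0) (tetraMatrix 3 1) (tetraMatrix 2 0) (tetraMatrix 2 1)
      (by rw [TetraAux.t30, TetraAux.t20, TetraAux.nb]; exact le_of_eq TetraAux.two_nb_eq_lam.symm)
      (by rw [TetraAux.t31, TetraAux.t21, TetraAux.neb _ (by simp [Complex.normSq_apply]; norm_num : Complex.normSq (-1 - Complex.I) = 2), TetraAux.neb _ (by simp [Complex.normSq_apply]; norm_num : Complex.normSq (1 + Complex.I) = 2)]; exact TetraAux.lam_le_two_na)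
      (by rw [TetraAux.t30, TetraAux.t31, TetraAux.t20, TetraAux.t21]; exact TetraAux.g_diag_b _ _ (by simp [Complex.ext_iff]))
      (Or.inl (by rw [TetraAux.t30, TetraAux.t20, TetraAux.nb]; exact TetraAux.two_nb_eq_lam))
    exact TetraAux.key _ _ _ _ h2 h1
  · exact absurd rfl hij
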